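/- Let g ≥ 1 and let A ∈ Sp(2g, ℤ) be a symmetric matrix. Suppose μ > 1 is an eigenvalue of A such that |α| ≤ μ for every complex eigenvalue α of A. Then every complex root β of the minimal polynomial of μ over ℚ satisfies 1/μ ≤ |β| ≤ μ; in particular, μ is a bi-Perron algebraic integer. -/

import Mathlib

open Matrix Polynomial

private lemma eval_charpoly' {n : Type*} [Fintype n] [DecidableEq n] (M : Matrix n n ℂ) (x : ℂ) :
    M.charpoly.eval x = (x • (1 : Matrix n n ℂ) - M).det := by
  rw [Matrix.charpoly, ← Polynomial.coe_evalRingHom, RingHom.map_det]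
  congr 1
  ext i j
  simp [Matrix.charmatrix_apply, Matrix.one_apply, Matrix.smul_apply, apply_ite,
    Matrix.diagonal_apply]

/-- For a complex symplectic-type matrix, roots of charpoly are nonzero and closed under
inversion. -/
private lemma symplectic_charpoly_inv {n : Type*} [Fintype n] [DecidableEq n]
    (B J : Matrix n n ℂ) (hJ : J * J = -1) (hB : Bᵀ * J * B = J) {β : ℂ}
    (hβ : B.charpoly.IsRoot β) : β ≠ 0 ∧ B.charpoly.IsRoot β⁻¹ := by
  set C : Matrix n n ℂ := -J * Bᵀ * J with hC
  have hB' : Bᵀ * (J * B) = J := by rw [← Matrix.mul_assoc]; exact hB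
  have hCB : C * B = 1 := by
    rw [hC, Matrix.mul_assoc, Matrix.mul_assoc, hB', Matrix.neg_mul, hJ, neg_neg]
  have hdetB : B.det ≠ 0 := by
    intro h
    have := congrArg Matrix.det hCB
    rw [Matrix.det_mul, h, mul_zero] at this
    simp at this
  have hβ0 : β ≠ 0 := by
    intro h
    rw [h] at hβ
    have := hβ
    rw [Polynomial.IsRoot, eval_charpoly'] at this
    simp [Matrix.det_neg] at this
    tauto
  refine ⟨hβ0, ?_⟩
  have hBC : B * C = 1 := mul_eq_one_comm.mp hCB
  -- Bᵀ * J = J * C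
  have hBtJ : Bᵀ * J = J * C := by
    have h1 : Bᵀ * J * B * C = J * C := by rw [hB]
    rwa [mul_assoc, hBC, mul_one] at h1
  have hdetJ : J.det ≠ 0 := by
    intro h
    have := congrArg Matrix.det hJ
    rw [Matrix.det_mul, h, mul_zero, Matrix.det_neg, Matrix.det_one, mul_one] at this
    exact (pow_ne_zero _ (by norm_num : (-1 : ℂ) ≠ 0)) this.symm
  -- det (β • 1 - C) = 0
  have h0 : (β • (1 : Matrix n n ℂ) - B).det = 0 := by
    rw [← eval_charpoly']; exact hβ
  have h1 : (β • (1 : Matrix n n ℂ) - Bᵀ).det = 0 := by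
    have : (β • (1 : Matrix n n ℂ) - Bᵀ) = (β • (1 : Matrix n n ℂ) - B)ᵀ := by
      rw [Matrix.transpose_sub, Matrix.transpose_smul, Matrix.transpose_one]
    rw [this, Matrix.det_transpose]; exact h0
  have h2 : (β • (1 : Matrix n n ℂ) - C).det = 0 := by
    have key : (β • (1 : Matrix n n ℂ) - Bᵀ) * J = J * (β • (1 : Matrix n n ℂ) - C) := by
      rw [sub_mul, mul_sub, hBtJ, Matrix.smul_mul, Matrix.mul_smul, one_mul, mul_one]
    have := congrArg Matrix.det key
    rw [Matrix.det_mul, Matrix.det_mul, h1, zero_mul] at this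
    exact (mul_eq_zero.mp this.symm).resolve_left hdetJ
  -- now (β•1 - C) * B = β • (B - β⁻¹ • 1)
  have h3 : (β • (1 : Matrix n n ℂ) - C) * B = β • (B - β⁻¹ • (1 : Matrix n n ℂ)) := by
    rw [sub_mul, hCB, Matrix.smul_mul, one_mul, smul_sub, smul_smul, mul_inv_cancel₀ hβ0,
      one_smul]
  have h4 : (B - β⁻¹ • (1 : Matrix n n ℂ)).det = 0 := by
    have := congrArg Matrix.det h3
    rw [Matrix.det_mul, h2, zero_mul, Matrix.det_smul] at this
    exact ((mul_eq_zero.mp this.symm).resolve_left (pow_ne_zero _ hβ0))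
  rw [Polynomial.IsRoot, eval_charpoly']
  have : (β⁻¹ • (1 : Matrix n n ℂ) - B) = -(B - β⁻¹ • (1 : Matrix n n ℂ)) := (neg_sub _ _).symm
  rw [this, Matrix.det_neg, h4, mul_zero]

/-- Let `g ≥ 1` and `A ∈ Sp(2g, ℤ)` be symmetric. If `μ > 1` is an eigenvalue of
`A` with `|α| ≤ μ` for every complex eigenvalue `α` of `A`, then every complex root `β` of
the minimal polynomial of `μ` over `ℚ` satisfies `1/μ ≤ |β| ≤ μ`; in particular `μ` is a
bi-Perron algebraic integer. -/
theorem leading_eigenvalue_of_symmetric_symplectic_biPerron (g : ℕ) (hg : 1 ≤ g)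
    (A : Matrix (Fin g ⊕ Fin g) (Fin g ⊕ Fin g) ℤ)
    (hSp : Aᵀ * Matrix.fromBlocks 0 1 (-1) 0 * A = Matrix.fromBlocks 0 1 (-1) 0)
    (hsymm : A.IsSymm) (μ : ℝ) (hμ : 1 < μ)
    (hroot : (A.map (Int.cast : ℤ → ℂ)).charpoly.IsRoot (μ : ℂ))
    (hlead : ∀ α : ℂ, (A.map (Int.cast : ℤ → ℂ)).charpoly.IsRoot α → ‖α‖ ≤ μ) :
    IsIntegral ℤ μ ∧
      ∀ β : ℂ, ((minpoly ℚ μ).map (algebraMap ℚ ℂ)).IsRoot β →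
        1 / μ ≤ ‖β‖ ∧ ‖β‖ ≤ μ := by
  set B : Matrix (Fin g ⊕ Fin g) (Fin g ⊕ Fin g) ℂ := A.map (Int.cast : ℤ → ℂ) with hBdef
  set J : Matrix (Fin g ⊕ Fin g) (Fin g ⊕ Fin g) ℂ := Matrix.fromBlocks 0 1 (-1) 0 with hJdef
  -- map the symplectic relation to ℂ
  have hJmap : (Int.castRingHom ℂ).mapMatrix (Matrix.fromBlocks 0 1 (-1) 0
      : Matrix (Fin g ⊕ Fin g) (Fin g ⊕ Fin g) ℤ) = J := by
    ext i j
    rcases i with i | i <;> rcases j with j | j <;>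
      simp [RingHom.mapMatrix_apply, Matrix.map_apply, hJdef, Matrix.one_apply, apply_ite]
  have hmap : Bᵀ * J * B = J := by
    have h := congrArg ((Int.castRingHom ℂ).mapMatrix) hSp
    rw [_root_.map_mul, _root_.map_mul, hJmap] at h
    rw [hBdef, ← Matrix.transpose_map]
    rw [RingHom.mapMatrix_apply, RingHom.mapMatrix_apply] at h
    exact h
  have hJ : J * J = -1 := by
    rw [hJdef, Matrix.fromBlocks_multiply, ← Matrix.fromBlocks_one, Matrix.fromBlocks_neg]
    congr 1 <;> simp
  -- charpoly of B is charpoly of A mapped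
  have hcpB : B.charpoly = A.charpoly.map (Int.castRingHom ℂ) :=
    Matrix.charpoly_map A (Int.castRingHom ℂ)
  -- μ is integral over ℤ
  have haevalC : (Polynomial.aeval (μ : ℂ)) A.charpoly = 0 := by
    have h : ((A.charpoly.map (Int.castRingHom ℂ)).eval (μ : ℂ)) = 0 := by
      rw [← hcpB]; exact hroot
    rwa [Polynomial.eval_map, show (Int.castRingHom ℂ) = algebraMap ℤ ℂ from rfl,
      ← Polynomial.aeval_def] at h
  have haevalR : (Polynomial.aeval μ) A.charpoly = 0 := by
    apply Complex.ofReal_injective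
    rw [Complex.ofReal_zero, ← haevalC]
    exact (Polynomial.aeval_algHom_apply Complex.ofRealHom.toIntAlgHom μ A.charpoly).symm
  have hint : IsIntegral ℤ μ := ⟨A.charpoly, A.charpoly_monic, haevalR⟩
  refine ⟨hint, ?_⟩
  -- minpoly divides the rationalized charpoly
  have hdvd : minpoly ℚ μ ∣ A.charpoly.map (Int.castRingHom ℚ) := by
    apply minpoly.dvd
    rw [show (Int.castRingHom ℚ) = algebraMap ℤ ℚ from rfl, Polynomial.aeval_map_algebraMap]
    exact haevalR
  intro β hβ
  -- β is a root of B.charpoly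
  have hβroot : B.charpoly.IsRoot β := by
    obtain ⟨q, hq⟩ := hdvd
    have hcomp : Polynomial.map (Int.castRingHom ℂ) A.charpoly =
        (A.charpoly.map (Int.castRingHom ℚ)).map (algebraMap ℚ ℂ) := by
      rw [Polynomial.map_map]
      congr 1
    rw [hcpB, hcomp, hq, Polynomial.map_mul]
    simp [Polynomial.IsRoot, Polynomial.eval_mul, hβ.eq_zero]
  obtain ⟨hβ0, hβinv⟩ := symplectic_charpoly_inv B J hJ hmap hβroot
  have habs : ‖β‖ ≤ μ := hlead β hβroot
  have habsinv : ‖β⁻¹‖ ≤ μ := hlead β⁻¹ hβinv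
  rw [norm_inv] at habsinv
  have habspos : 0 < ‖β‖ := by
    simpa using (norm_pos_iff.mpr hβ0)
  have hμpos : (0 : ℝ) < μ := lt_trans one_pos hμ
  constructor
  · rw [div_le_iff₀ hμpos]
    nlinarith [inv_mul_cancel₀ habspos.ne']
  · exact habs
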